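/- Let R be a commutative ring, let q = Σ_{i+j+k=4} a_{ijk} x^i y^j z^k be a ternary quartic form over R and write H(q) = Σ_{i+j+k=4} h_{ijk} u^i v^j w^k (with the convention a_{ijk} = 0 whenever some index is negative). Then the following six identities hold, all sums taken over i,j,k ≥ 0 with i+j+k = 4: (1) Σ (i−j)(i!j!k!/2) a_{ijk} h_{ijk} = 0; (2) Σ (i+1)(i!j!k!/2) a_{(i+1)(j−1)k} h_{ijk} = 0; (3) Σ (i+1)(i!j!k!/2) a_{(i+1)j(k−1)} h_{ijk} = 0; (4) Σ (j−k)(i!j!k!/2) a_{ijk} h_{ijk} = 0; (5) Σ (j+1)(i!j!k!/2) a_{i(j+1)(k−1)} h_{ijk} = 0; (6) Σ (j+1)(i!j!k!/2) a_{(i−1)(j+1)k} h_{ijk} = 0. -/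

import Mathlib

open MvPolynomial

noncomputable section

/-- The classical invariant `S` of a binary quartic form with coefficients `f 0, …, f 4`. -/
def Sinv {R : Type*} [CommRing R] (f : Fin 5 → R) : R :=
  12 * f 0 * f 4 - 3 * f 1 * f 3 + f 2 ^ 2

/-- The classical invariant `T` of a binary quartic form with coefficients `f 0, …, f 4`. -/
def Tinv {R : Type*} [CommRing R] (f : Fin 5 → R) : R :=
  72 * f 0 * f 2 * f 4 - 27 * f 0 * f 3 ^ 2 - 27 * f 1 ^ 2 * f 4
    + 9 * f 1 * f 2 * f 3 - 2 * f 2 ^ 3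

/-- The binary quartic form `f₀ y⁴ + f₁ y³z + f₂ y²z² + f₃ yz³ + f₄ z⁴`. -/
def binQuartic {R : Type*} [CommRing R] (f : Fin 5 → R) : MvPolynomial (Fin 2) R :=
  ∑ i : Fin 5, C (f i) * X 0 ^ (4 - (i : ℕ)) * X 1 ^ (i : ℕ)

/-- The `i`-th coefficient of a binary quartic form: coefficient of `y^(4-i) z^i`. -/
def binCoeff {R : Type*} [CommRing R] (g : MvPolynomial (Fin 2) R) (i : Fin 5) : R :=
  coeff (Finsupp.single 0 (4 - (i : ℕ)) + Finsupp.single 1 (i : ℕ)) g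

/-- The substitution `g(y,z) = q(-v·y - w·z, u·y, u·z)`, a binary quartic form in `y, z` with
coefficients in `R[u,v,w]`. -/
def gsub {R : Type*} [CommRing R] (q : MvPolynomial (Fin 3) R) :
    MvPolynomial (Fin 2) (MvPolynomial (Fin 3) R) :=
  aeval
    (![(C (- X 1) * X 0 - C (X 2) * X 1 : MvPolynomial (Fin 2) (MvPolynomial (Fin 3) R)),
       C (X 0) * X 0, C (X 0) * X 1]) q

/-- `u⁴ · H(q)`, the invariant `S` of `g(y,z) = q(-vy-wz, uy, uz)`; the harmonic quartic `H(q)`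
is the form determined by `u⁴ · H(q) = SG q`. -/
def SG {R : Type*} [CommRing R] (q : MvPolynomial (Fin 3) R) : MvPolynomial (Fin 3) R :=
  Sinv (fun i => binCoeff (gsub q) i)

/-- `u⁶ · K(q)`, the invariant `T` of `g(y,z) = q(-vy-wz, uy, uz)`; the harmonic sextic `K(q)`
is the form determined by `u⁶ · K(q) = TG q`. -/
def TG {R : Type*} [CommRing R] (q : MvPolynomial (Fin 3) R) : MvPolynomial (Fin 3) R :=
  Tinv (fun i => binCoeff (gsub q) i)

/-- dot product of two vectors in `R³`. -/
def dot3 {R : Type*} [CommRing R] (d a : Fin 3 → R) : R :=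
  d 0 * a 0 + d 1 * a 1 + d 2 * a 2

/-- restriction of a ternary form to the parameterized line `(y,z) ↦ y·a + z·b`. -/
def restrictLine {R : Type*} [CommRing R] (q : MvPolynomial (Fin 3) R) (a b : Fin 3 → R) :
    MvPolynomial (Fin 2) R :=
  aeval (fun i => C (a i) * X 0 + C (b i) * X 1) q

/-- A binary quartic form vanishes identically or has a root of multiplicity at least `3`:
`f = L³·M` with `L ≠ 0` linear and `M` linear (possibly zero). -/
def HasTripleRoot {R : Type*} [CommRing R] (f : MvPolynomial (Fin 2) R) : Prop :=
  ∃ L M : MvPolynomial (Fin 2) R,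
    L.IsHomogeneous 1 ∧ M.IsHomogeneous 1 ∧ L ≠ 0 ∧ f = L ^ 3 * M

/-- The line with dual coordinates `d` is an inflection line of the quartic `{q = 0}`. -/
def IsInflectionLine {k : Type*} [Field k] (q : MvPolynomial (Fin 3) k) (d : Fin 3 → k) :
    Prop :=
  d ≠ 0 ∧ ∃ a b : Fin 3 → k, LinearIndependent k ![a, b] ∧
    dot3 d a = 0 ∧ dot3 d b = 0 ∧ HasTripleRoot (restrictLine q a b)

/-- The line with dual coordinates `d` is a simple inflection line of `{q = 0}` with
inflection point `p`. -/
def IsSimpleInflectionLineAt {k : Type*} [Field k] (q : MvPolynomial (Fin 3) k)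
    (d p : Fin 3 → k) : Prop :=
  d ≠ 0 ∧ ∃ (a b : Fin 3 → k) (s t : k), LinearIndependent k ![a, b] ∧
    dot3 d a = 0 ∧ dot3 d b = 0 ∧ (s, t) ≠ (0, 0) ∧
    (∀ i, p i = s * a i + t * b i) ∧
    eval p q = 0 ∧ (∃ i, eval p (pderiv i q) ≠ 0) ∧
    ∃ L M : MvPolynomial (Fin 2) k, L.IsHomogeneous 1 ∧ M.IsHomogeneous 1 ∧
      LinearIndependent k ![L, M] ∧
      restrictLine q a b = L ^ 3 * M ∧ eval ![s, t] L = 0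

/-- The line with dual coordinates `d` is a hyperinflection line of `{q = 0}` with
hyperinflection point `p`. -/
def IsHyperinflectionLineAt {k : Type*} [Field k] (q : MvPolynomial (Fin 3) k)
    (d p : Fin 3 → k) : Prop :=
  d ≠ 0 ∧ ∃ (a b : Fin 3 → k) (s t : k), LinearIndependent k ![a, b] ∧
    dot3 d a = 0 ∧ dot3 d b = 0 ∧ (s, t) ≠ (0, 0) ∧
    (∀ i, p i = s * a i + t * b i) ∧
    eval p q = 0 ∧ (∃ i, eval p (pderiv i q) ≠ 0) ∧
    ∃ (c : k) (L : MvPolynomial (Fin 2) k), c ≠ 0 ∧ L.IsHomogeneous 1 ∧ L ≠ 0 ∧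
      restrictLine q a b = C c * L ^ 4 ∧ eval ![s, t] L = 0

/-- The pairing `⟨·,·⟩` between quartic forms in `x,y,z` and quartic forms in `u,v,w`:
`⟨x^i y^j z^k, u^i v^j w^k⟩ = i!j!k!/2`. -/
def pairQ {R : Type*} [CommRing R] (q h : MvPolynomial (Fin 3) R) : R :=
  ∑ m ∈ q.support,
    (((m 0).factorial * (m 1).factorial * (m 2).factorial / 2 : ℕ) : R)
      * coeff m q * coeff m h

/-- The action of `Σ c_{ξη} ξ ∂_η ∈ 𝔤𝔩₃(R)` on polynomials. -/
def lieAct {R : Type*} [CommRing R] (c : Fin 3 → Fin 3 → R)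
    (q : MvPolynomial (Fin 3) R) : MvPolynomial (Fin 3) R :=
  ∑ ξ : Fin 3, ∑ η : Fin 3, C (c ξ η) * (X ξ * pderiv η q)

/-- substitution of variables by the linear change of coordinates `M`: `q(M·(x,y,z)ᵗ)`. -/
def substM {R : Type*} [CommRing R] (M : Matrix (Fin 3) (Fin 3) R)
    (q : MvPolynomial (Fin 3) R) : MvPolynomial (Fin 3) R :=
  aeval (fun i => ∑ j : Fin 3, C (M i j) * X j) q

/-- The quartic form `q_ε = (x−y)⁴ + (x−z)⁴ + (y−εz)⁴ − (x⁴ + y⁴ + z⁴)`. -/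
def qeps {k : Type*} [CommRing k] (ε : k) : MvPolynomial (Fin 3) k :=
  (X 0 - X 1) ^ 4 + (X 0 - X 2) ^ 4 + (X 1 - C ε * X 2) ^ 4
    - (X 0 ^ 4 + X 1 ^ 4 + X 2 ^ 4)

/-- The coefficient `a_{ijl}` of a ternary form, with integer indices and the convention that
it vanishes when some index is negative. -/
def tcoeff {R : Type*} [CommRing R] (g : MvPolynomial (Fin 3) R) (i j l : ℤ) : R :=
  if 0 ≤ i ∧ 0 ≤ j ∧ 0 ≤ l then
    coeff (Finsupp.single 0 i.toNat + Finsupp.single 1 j.toNat + Finsupp.single 2 l.toNat) g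
  else 0

/-- `i!·j!·l!/2`; an integer whenever `i+j+l = 4`. -/
def fac3 (i j l : ℕ) : ℕ := i.factorial * j.factorial * l.factorial / 2


set_option maxHeartbeats 4000000
section Aux
variable {R : Type*} [CommRing R]

lemma myToNat (n : ℕ) [n.AtLeastTwo] :
    (Int.toNat (OfNat.ofNat n)) = OfNat.ofNat n := rfl

def mon3 (i j k : ℕ) : Fin 3 →₀ ℕ :=
  Finsupp.single 0 i + Finsupp.single 1 j + Finsupp.single 2 k

lemma mon3_eq_iff {i j k i' j' k' : ℕ} :
    mon3 i j k = mon3 i' j' k' ↔ i = i' ∧ j = j' ∧ k = k' := by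
  constructor
  · intro h
    have h0 := DFunLike.congr_fun h 0
    have h1 := DFunLike.congr_fun h 1
    have h2 := DFunLike.congr_fun h 2
    simp [mon3, Finsupp.single_apply] at h0 h1 h2
    exact ⟨h0, h1, h2⟩
  · rintro ⟨rfl, rfl, rfl⟩; rfl

def mon2 (s t : ℕ) : Fin 2 →₀ ℕ := Finsupp.single 0 s + Finsupp.single 1 t

lemma mon2_eq_iff {s t s' t' : ℕ} : mon2 s t = mon2 s' t' ↔ s = s' ∧ t = t' := by
  constructor
  · intro h
    have h0 := DFunLike.congr_fun h 0
    have h1 := DFunLike.congr_fun h 1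
    simp [mon2, Finsupp.single_apply] at h0 h1
    exact ⟨h0, h1⟩
  · rintro ⟨rfl, rfl⟩; rfl

lemma monomial_mon2 (s t : ℕ) (c : R) :
    (monomial (mon2 s t) c : MvPolynomial (Fin 2) R) = C c * X 0 ^ s * X 1 ^ t := by
  rw [mon2, monomial_add_single, C_mul_X_pow_eq_monomial]

lemma monomial_mon3 (i j k : ℕ) (c : R) :
    (monomial (mon3 i j k) c : MvPolynomial (Fin 3) R) = C c * X 0 ^ i * X 1 ^ j * X 2 ^ k := by
  rw [mon3, monomial_add_single, monomial_add_single, C_mul_X_pow_eq_monomial]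

lemma algCC (a : R) :
    (algebraMap R (MvPolynomial (Fin 2) (MvPolynomial (Fin 3) R)) a) = C (C a) := rfl

lemma mem_of_deg4 (m : Fin 3 →₀ ℕ) (hm : m 0 + m 1 + m 2 = 4) :
    ∃ i j k, m = mon3 i j k ∧ i + j + k = 4 := by
  refine ⟨m 0, m 1, m 2, ?_, hm⟩
  ext a
  fin_cases a <;> simp [mon3, Finsupp.single_apply]

lemma lemA (q h : MvPolynomial (Fin 3) R) (hh : X 0 ^ 4 * h = SG q) (i j k s : ℕ)
    (hs : s = i + 4) :
    coeff (mon3 i j k) h = coeff (mon3 s j k) (SG q) := by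
  subst hs
  rw [← hh, X_pow_eq_monomial]
  have e : mon3 (i+4) j k = (Finsupp.single (0 : Fin 3) 4) + mon3 i j k := by
    ext a; fin_cases a <;> simp [mon3, Finsupp.single_apply]; omega
  rw [e, coeff_monomial_mul, one_mul]

lemma sum_adt {M : Type*} [AddCommMonoid M] (F : (Fin 3 → ℕ) → M) :
    ∑ m ∈ Finset.Nat.antidiagonalTuple 3 4, F m =
    F ![0,0,4] + F ![0,1,3] + F ![0,2,2] + F ![0,3,1] + F ![0,4,0] + F ![1,0,3] +
    F ![1,1,2] + F ![1,2,1] + F ![1,3,0] + F ![2,0,2] + F ![2,1,1] + F ![2,2,0] +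
    F ![3,0,1] + F ![3,1,0] + F ![4,0,0] := by
  rw [show Finset.Nat.antidiagonalTuple 3 4 =
    {![0,0,4],![0,1,3],![0,2,2],![0,3,1],![0,4,0],![1,0,3],![1,1,2],![1,2,1],![1,3,0],
      ![2,0,2],![2,1,1],![2,2,0],![3,0,1],![3,1,0],![4,0,0]} from by decide]
  rw [Finset.sum_insert (by decide), Finset.sum_insert (by decide),
    Finset.sum_insert (by decide), Finset.sum_insert (by decide),
    Finset.sum_insert (by decide), Finset.sum_insert (by decide),
    Finset.sum_insert (by decide), Finset.sum_insert (by decide),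
    Finset.sum_insert (by decide), Finset.sum_insert (by decide),
    Finset.sum_insert (by decide), Finset.sum_insert (by decide),
    Finset.sum_insert (by decide), Finset.sum_insert (by decide),
    Finset.sum_singleton]
  abel


def Q15 (c400 c310 c301 c220 c211 c202 c130 c121 c112 c103 c040 c031 c022 c013 c004 : R) : MvPolynomial (Fin 3) R :=
  monomial (mon3 4 0 0) c400 + monomial (mon3 3 1 0) c310 + monomial (mon3 3 0 1) c301 + monomial (mon3 2 2 0) c220 + monomial (mon3 2 1 1) c211 + monomial (mon3 2 0 2) c202 + monomial (mon3 1 3 0) c130 + monomial (mon3 1 2 1) c121 + monomial (mon3 1 1 2) c112 + monomial (mon3 1 0 3) c103 + monomial (mon3 0 4 0) c040 + monomial (mon3 0 3 1) c031 + monomial (mon3 0 2 2) c022 + monomial (mon3 0 1 3) c013 + monomial (mon3 0 0 4) c004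

lemma decomp (q : MvPolynomial (Fin 3) R) (hq : q.IsHomogeneous 4) :
    q = Q15 (coeff (mon3 4 0 0) q) (coeff (mon3 3 1 0) q) (coeff (mon3 3 0 1) q) (coeff (mon3 2 2 0) q) (coeff (mon3 2 1 1) q) (coeff (mon3 2 0 2) q) (coeff (mon3 1 3 0) q) (coeff (mon3 1 2 1) q) (coeff (mon3 1 1 2) q) (coeff (mon3 1 0 3) q) (coeff (mon3 0 4 0) q) (coeff (mon3 0 3 1) q) (coeff (mon3 0 2 2) q) (coeff (mon3 0 1 3) q) (coeff (mon3 0 0 4) q) := by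
  apply MvPolynomial.ext
  intro m
  rw [Q15]
  simp only [coeff_add, coeff_monomial]
  have hdeg : m.degree = m 0 + m 1 + m 2 := by
    rw [Finsupp.degree_apply, Finset.sum_subset (Finset.subset_univ m.support)
      (fun x _ hx => Finsupp.notMem_support_iff.mp hx), Fin.sum_univ_three]
  by_cases h4 : m 0 + m 1 + m 2 = 4
  · obtain ⟨i, j, k, rfl, hs⟩ := mem_of_deg4 m h4
    have hi : i ≤ 4 := by omega
    have hj : j ≤ 4 := by omega
    have hk : k ≤ 4 := by omega
    interval_cases i <;> interval_cases j <;> interval_cases k <;>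
      simp_all [mon3_eq_iff]
  · have h0 : coeff m q = 0 := hq.coeff_eq_zero (by rw [hdeg]; exact_mod_cast h4)
    have hne : ∀ i j k : ℕ, i + j + k = 4 → ¬ (mon3 i j k = m) := by
      rintro i j k hs rfl
      apply h4
      simp [mon3, Finsupp.single_apply]
      omega
    rw [if_neg (hne 4 0 0 (by norm_num)),
    if_neg (hne 3 1 0 (by norm_num)),
    if_neg (hne 3 0 1 (by norm_num)),
    if_neg (hne 2 2 0 (by norm_num)),
    if_neg (hne 2 1 1 (by norm_num)),
    if_neg (hne 2 0 2 (by norm_num)),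
    if_neg (hne 1 3 0 (by norm_num)),
    if_neg (hne 1 2 1 (by norm_num)),
    if_neg (hne 1 1 2 (by norm_num)),
    if_neg (hne 1 0 3 (by norm_num)),
    if_neg (hne 0 4 0 (by norm_num)),
    if_neg (hne 0 3 1 (by norm_num)),
    if_neg (hne 0 2 2 (by norm_num)),
    if_neg (hne 0 1 3 (by norm_num)),
    if_neg (hne 0 0 4 (by norm_num))]
    simp [h0]
variable (c400 c310 c301 c220 c211 c202 c130 c121 c112 c103 c040 c031 c022 c013 c004 : R)

set_option maxRecDepth 100000 in
lemma gsub_Q15 : gsub (Q15 c400 c310 c301 c220 c211 c202 c130 c121 c112 c103 c040 c031 c022 c013 c004) =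
    monomial (mon2 4 0) ((1) * C c400 * X 0 ^ 0 * X 1 ^ 4 * X 2 ^ 0 + (-1) * C c310 * X 0 ^ 1 * X 1 ^ 3 * X 2 ^ 0 + (1) * C c220 * X 0 ^ 2 * X 1 ^ 2 * X 2 ^ 0 + (-1) * C c130 * X 0 ^ 3 * X 1 ^ 1 * X 2 ^ 0 + (1) * C c040 * X 0 ^ 4 * X 1 ^ 0 * X 2 ^ 0) + monomial (mon2 3 1) ((4) * C c400 * X 0 ^ 0 * X 1 ^ 3 * X 2 ^ 1 + (-3) * C c310 * X 0 ^ 1 * X 1 ^ 2 * X 2 ^ 1 + (-1) * C c301 * X 0 ^ 1 * X 1 ^ 3 * X 2 ^ 0 + (2) * C c220 * X 0 ^ 2 * X 1 ^ 1 * X 2 ^ 1 + (1) * C c211 * X 0 ^ 2 * X 1 ^ 2 * X 2 ^ 0 + (-1) * C c130 * X 0 ^ 3 * X 1 ^ 0 * X 2 ^ 1 + (-1) * C c121 * X 0 ^ 3 * X 1 ^ 1 * X 2 ^ 0 + (1) * C c031 * X 0 ^ 4 * X 1 ^ 0 * X 2 ^ 0) + monomial (mon2 2 2) ((6) * C c400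 * X 0 ^ 0 * X 1 ^ 2 * X 2 ^ 2 + (-3) * C c310 * X 0 ^ 1 * X 1 ^ 1 * X 2 ^ 2 + (-3) * C c301 * X 0 ^ 1 * X 1 ^ 2 * X 2 ^ 1 + (1) * C c220 * X 0 ^ 2 * X 1 ^ 0 * X 2 ^ 2 + (2) * C c211 * X 0 ^ 2 * X 1 ^ 1 * X 2 ^ 1 + (1) * C c202 * X 0 ^ 2 * X 1 ^ 2 * X 2 ^ 0 + (-1) * C c121 * X 0 ^ 3 * X 1 ^ 0 * X 2 ^ 1 + (-1) * C c112 * X 0 ^ 3 * X 1 ^ 1 * X 2 ^ 0 + (1) * C c022 * X 0 ^ 4 * X 1 ^ 0 * X 2 ^ 0) + monomial (mon2 1 3) ((4) * C c400 * X 0 ^ 0 * X 1 ^ 1 * X 2 ^ 3 + (-1) * C c310 * X 0 ^ 1 * X 1 ^ 0 * X 2 ^ 3 + (-3) * C c301 * X 0 ^ 1 * X 1 ^ 1 * X 2 ^ 2 + (1) * C c211 * X 0 ^ 2 * X 1 ^ 0 * X 2 ^ 2 + (2) * C c202 * X 0 ^ 2 * X 1 ^ 1 * X 2 ^ 1 +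 (-1) * C c112 * X 0 ^ 3 * X 1 ^ 0 * X 2 ^ 1 + (-1) * C c103 * X 0 ^ 3 * X 1 ^ 1 * X 2 ^ 0 + (1) * C c013 * X 0 ^ 4 * X 1 ^ 0 * X 2 ^ 0) + monomial (mon2 0 4) ((1) * C c400 * X 0 ^ 0 * X 1 ^ 0 * X 2 ^ 4 + (-1) * C c301 * X 0 ^ 1 * X 1 ^ 0 * X 2 ^ 3 + (1) * C c202 * X 0 ^ 2 * X 1 ^ 0 * X 2 ^ 2 + (-1) * C c103 * X 0 ^ 3 * X 1 ^ 0 * X 2 ^ 1 + (1) * C c004 * X 0 ^ 4 * X 1 ^ 0 * X 2 ^ 0) := by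
  simp only [Q15, gsub, monomial_mon3, monomial_mon2, map_add, map_mul, map_pow, map_neg,
    map_sub, map_one, map_ofNat, aeval_X, aeval_C, algCC, Matrix.cons_val_zero,
    Matrix.cons_val_one, Matrix.head_cons, Matrix.cons_val_two, Matrix.tail_cons]
  ring


lemma binb0 : binCoeff (gsub (Q15 c400 c310 c301 c220 c211 c202 c130 c121 c112 c103 c040 c031 c022 c013 c004)) 0 = (1) * C c400 * X 0 ^ 0 * X 1 ^ 4 * X 2 ^ 0 + (-1) * C c310 * X 0 ^ 1 * X 1 ^ 3 * X 2 ^ 0 + (1) * C c220 * X 0 ^ 2 * X 1 ^ 2 * X 2 ^ 0 + (-1) * C c130 * X 0 ^ 3 * X 1 ^ 1 * X 2 ^ 0 + (1) * C c040 * X 0 ^ 4 * X 1 ^ 0 * X 2 ^ 0 := by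
  have e : binCoeff (gsub (Q15 c400 c310 c301 c220 c211 c202 c130 c121 c112 c103 c040 c031 c022 c013 c004)) 0
      = coeff (mon2 4 0) (gsub (Q15 c400 c310 c301 c220 c211 c202 c130 c121 c112 c103 c040 c031 c022 c013 c004)) := rfl
  rw [e, gsub_Q15]
  simp only [coeff_add, coeff_monomial, mon2_eq_iff]
  norm_num
lemma binb1 : binCoeff (gsub (Q15 c400 c310 c301 c220 c211 c202 c130 c121 c112 c103 c040 c031 c022 c013 c004)) 1 = (4) * C c400 * X 0 ^ 0 * X 1 ^ 3 * X 2 ^ 1 + (-3) * C c310 * X 0 ^ 1 * X 1 ^ 2 * X 2 ^ 1 + (-1) * C c301 * X 0 ^ 1 * X 1 ^ 3 * X 2 ^ 0 + (2) * C c220 * X 0 ^ 2 * X 1 ^ 1 * X 2 ^ 1 + (1) * C c211 * X 0 ^ 2 * X 1 ^ 2 * X 2 ^ 0 + (-1) * C c130 * X 0 ^ 3 * X 1 ^ 0 * X 2 ^ 1 + (-1) * C c121 * X 0 ^ 3 * X 1 ^ 1 * X 2 ^ 0 + (1) * C c031 * X 0 ^ 4 * X 1 ^ 0 * X 2 ^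 0 := by
  have e : binCoeff (gsub (Q15 c400 c310 c301 c220 c211 c202 c130 c121 c112 c103 c040 c031 c022 c013 c004)) 1
      = coeff (mon2 3 1) (gsub (Q15 c400 c310 c301 c220 c211 c202 c130 c121 c112 c103 c040 c031 c022 c013 c004)) := rfl
  rw [e, gsub_Q15]
  simp only [coeff_add, coeff_monomial, mon2_eq_iff]
  norm_num
lemma binb2 : binCoeff (gsub (Q15 c400 c310 c301 c220 c211 c202 c130 c121 c112 c103 c040 c031 c022 c013 c004)) 2 = (6) * C c400 * X 0 ^ 0 * X 1 ^ 2 * X 2 ^ 2 + (-3) * C c310 * X 0 ^ 1 * X 1 ^ 1 * X 2 ^ 2 + (-3) * C c301 * X 0 ^ 1 * X 1 ^ 2 * X 2 ^ 1 + (1) * C c220 * X 0 ^ 2 * X 1 ^ 0 * X 2 ^ 2 + (2) * C c211 * X 0 ^ 2 * X 1 ^ 1 * X 2 ^ 1 + (1) * C c202 * X 0 ^ 2 * X 1 ^ 2 * X 2 ^ 0 + (-1) * C c121 * X 0 ^ 3 * X 1 ^ 0 * X 2 ^ 1 + (-1) * C c112 * X 0 ^ 3 * X 1 ^ 1 * X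 2 ^ 0 + (1) * C c022 * X 0 ^ 4 * X 1 ^ 0 * X 2 ^ 0 := by
  have e : binCoeff (gsub (Q15 c400 c310 c301 c220 c211 c202 c130 c121 c112 c103 c040 c031 c022 c013 c004)) 2
      = coeff (mon2 2 2) (gsub (Q15 c400 c310 c301 c220 c211 c202 c130 c121 c112 c103 c040 c031 c022 c013 c004)) := rfl
  rw [e, gsub_Q15]
  simp only [coeff_add, coeff_monomial, mon2_eq_iff]
  norm_num
lemma binb3 : binCoeff (gsub (Q15 c400 c310 c301 c220 c211 c202 c130 c121 c112 c103 c040 c031 c022 c013 c004)) 3 = (4) * C c400 * X 0 ^ 0 * X 1 ^ 1 * X 2 ^ 3 + (-1) * C c310 * X 0 ^ 1 * X 1 ^ 0 * X 2 ^ 3 + (-3) * C c301 * X 0 ^ 1 * X 1 ^ 1 * X 2 ^ 2 + (1) * C c211 * X 0 ^ 2 * X 1 ^ 0 * X 2 ^ 2 + (2) * C c202 * X 0 ^ 2 * X 1 ^ 1 * X 2 ^ 1 + (-1) * C c112 * X 0 ^ 3 * X 1 ^ 0 * X 2 ^ 1 + (-1) * C c103 * X 0 ^ 3 * X 1 ^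 1 * X 2 ^ 0 + (1) * C c013 * X 0 ^ 4 * X 1 ^ 0 * X 2 ^ 0 := by
  have e : binCoeff (gsub (Q15 c400 c310 c301 c220 c211 c202 c130 c121 c112 c103 c040 c031 c022 c013 c004)) 3
      = coeff (mon2 1 3) (gsub (Q15 c400 c310 c301 c220 c211 c202 c130 c121 c112 c103 c040 c031 c022 c013 c004)) := rfl
  rw [e, gsub_Q15]
  simp only [coeff_add, coeff_monomial, mon2_eq_iff]
  norm_num
lemma binb4 : binCoeff (gsub (Q15 c400 c310 c301 c220 c211 c202 c130 c121 c112 c103 c040 c031 c022 c013 c004)) 4 = (1) * C c400 * X 0 ^ 0 * X 1 ^ 0 * X 2 ^ 4 + (-1) * C c301 * X 0 ^ 1 * X 1 ^ 0 * X 2 ^ 3 + (1) * C c202 * X 0 ^ 2 * X 1 ^ 0 * X 2 ^ 2 + (-1) * C c103 * X 0 ^ 3 * X 1 ^ 0 * X 2 ^ 1 + (1) * C c004 * X 0 ^ 4 * X 1 ^ 0 * X 2 ^ 0 := by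
  have e : binCoeff (gsub (Q15 c400 c310 c301 c220 c211 c202 c130 c121 c112 c103 c040 c031 c022 c013 c004)) 4
      = coeff (mon2 0 4) (gsub (Q15 c400 c310 c301 c220 c211 c202 c130 c121 c112 c103 c040 c031 c022 c013 c004)) := rfl
  rw [e, gsub_Q15]
  simp only [coeff_add, coeff_monomial, mon2_eq_iff]
  norm_num


lemma SG_Q15 : SG (Q15 c400 c310 c301 c220 c211 c202 c130 c121 c112 c103 c040 c031 c022 c013 c004) =
    monomial (mon3 8 0 0) ((12) * c004 * c040 + (-3) * c013 * c031 + (1) * c022 * c022) +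
    monomial (mon3 7 1 0) ((-12) * c004 * c130 + (3) * c013 * c121 + (3) * c031 * c103 + (-2) * c022 * c112) +
    monomial (mon3 7 0 1) ((-12) * c040 * c103 + (3) * c013 * c130 + (3) * c031 * c112 + (-2) * c022 * c121) +
    monomial (mon3 6 2 0) ((12) * c004 * c220 + (-3) * c013 * c211 + (-3) * c103 * c121 + (2) * c022 * c202 + (1) * c112 * c112) +
    monomial (mon3 6 1 1) ((9) * c103 * c130 + (-6) * c013 * c220 + (-1) * c112 * c121 + (-6) * c031 * c202 + (4) * c022 * c211) +
    monomial (mon3 6 0 2) ((12) * c040 * c202 + (-3) * c112 * c130 + (-3) * c031 * c211 + (2) * c022 * c220 + (1) * c121 * c121) +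
    monomial (mon3 5 3 0) ((-12) * c004 * c310 + (3) * c013 * c301 + (3) * c103 * c211 + (-2) * c112 * c202) +
    monomial (mon3 5 2 1) ((-6) * c103 * c220 + (9) * c013 * c310 + (-1) * c112 * c211 + (4) * c121 * c202 + (-6) * c022 * c301) +
    monomial (mon3 5 1 2) ((-6) * c130 * c202 + (4) * c112 * c220 + (-1) * c121 * c211 + (9) * c031 * c301 + (-6) * c022 * c310) +
    monomial (mon3 5 0 3) ((-12) * c040 * c301 + (3) * c130 * c211 + (3) * c031 * c310 + (-2) * c121 * c220) +
    monomial (mon3 4 4 0) ((12) * c004 * c400 + (-3) * c103 * c301 + (1) * c202 * c202) +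
    monomial (mon3 4 3 1) ((3) * c103 * c310 + (-12) * c013 * c400 + (3) * c112 * c301 + (-2) * c202 * c211) +
    monomial (mon3 4 2 2) ((2) * c202 * c220 + (-3) * c112 * c310 + (1) * c211 * c211 + (-3) * c121 * c301 + (12) * c022 * c400) +
    monomial (mon3 4 1 3) ((3) * c130 * c301 + (-2) * c211 * c220 + (3) * c121 * c310 + (-12) * c031 * c400) +
    monomial (mon3 4 0 4) ((12) * c040 * c400 + (-3) * c130 * c310 + (1) * c220 * c220) := by
  have e : SG (Q15 c400 c310 c301 c220 c211 c202 c130 c121 c112 c103 c040 c031 c022 c013 c004) = 12 * binCoeff (gsub (Q15 c400 c310 c301 c220 c211 c202 c130 c121 c112 c103 c040 c031 c022 c013 c004)) 0 * binCoeff (gsub (Q15 c400 c310 c301 c220 c211 c202 c130 c121 c112 c103 c040 c031 c022 c013 c004)) 4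
      - 3 * binCoeff (gsub (Q15 c400 c310 c301 c220 c211 c202 c130 c121 c112 c103 c040 c031 c022 c013 c004)) 1 * binCoeff (gsub (Q15 c400 c310 c301 c220 c211 c202 c130 c121 c112 c103 c040 c031 c022 c013 c004)) 3
      + binCoeff (gsub (Q15 c400 c310 c301 c220 c211 c202 c130 c121 c112 c103 c040 c031 c022 c013 c004)) 2 ^ 2 := rfl
  rw [e, binb0, binb1, binb2, binb3, binb4]
  simp only [monomial_mon3, map_add, map_sub, map_mul, map_pow, map_neg, map_one, map_ofNat]
  push_cast [map_ofNat]
  ring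

lemma ext400 : coeff (mon3 8 0 0) (SG (Q15 c400 c310 c301 c220 c211 c202 c130 c121 c112 c103 c040 c031 c022 c013 c004)) = (12) * c004 * c040 + (-3) * c013 * c031 + (1) * c022 * c022 := by
  rw [SG_Q15]
  simp only [coeff_add, coeff_monomial, mon3_eq_iff]
  norm_num
lemma ext310 : coeff (mon3 7 1 0) (SG (Q15 c400 c310 c301 c220 c211 c202 c130 c121 c112 c103 c040 c031 c022 c013 c004)) = (-12) * c004 * c130 + (3) * c013 * c121 + (3) * c031 * c103 + (-2) * c022 * c112 := by
  rw [SG_Q15]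
  simp only [coeff_add, coeff_monomial, mon3_eq_iff]
  norm_num
lemma ext301 : coeff (mon3 7 0 1) (SG (Q15 c400 c310 c301 c220 c211 c202 c130 c121 c112 c103 c040 c031 c022 c013 c004)) = (-12) * c040 * c103 + (3) * c013 * c130 + (3) * c031 * c112 + (-2) * c022 * c121 := by
  rw [SG_Q15]
  simp only [coeff_add, coeff_monomial, mon3_eq_iff]
  norm_num
lemma ext220 : coeff (mon3 6 2 0) (SG (Q15 c400 c310 c301 c220 c211 c202 c130 c121 c112 c103 c040 c031 c022 c013 c004)) = (12) * c004 * c220 + (-3) * c013 * c211 + (-3) * c103 * c121 + (2) * c022 * c202 + (1) * c112 * c112 := by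
  rw [SG_Q15]
  simp only [coeff_add, coeff_monomial, mon3_eq_iff]
  norm_num
lemma ext211 : coeff (mon3 6 1 1) (SG (Q15 c400 c310 c301 c220 c211 c202 c130 c121 c112 c103 c040 c031 c022 c013 c004)) = (9) * c103 * c130 + (-6) * c013 * c220 + (-1) * c112 * c121 + (-6) * c031 * c202 + (4) * c022 * c211 := by
  rw [SG_Q15]
  simp only [coeff_add, coeff_monomial, mon3_eq_iff]
  norm_num
lemma ext202 : coeff (mon3 6 0 2) (SG (Q15 c400 c310 c301 c220 c211 c202 c130 c121 c112 c103 c040 c031 c022 c013 c004)) = (12) * c040 * c202 + (-3) * c112 * c130 + (-3) * c031 * c211 + (2) * c022 * c220 + (1) * c121 * c121 := by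
  rw [SG_Q15]
  simp only [coeff_add, coeff_monomial, mon3_eq_iff]
  norm_num
lemma ext130 : coeff (mon3 5 3 0) (SG (Q15 c400 c310 c301 c220 c211 c202 c130 c121 c112 c103 c040 c031 c022 c013 c004)) = (-12) * c004 * c310 + (3) * c013 * c301 + (3) * c103 * c211 + (-2) * c112 * c202 := by
  rw [SG_Q15]
  simp only [coeff_add, coeff_monomial, mon3_eq_iff]
  norm_num
lemma ext121 : coeff (mon3 5 2 1) (SG (Q15 c400 c310 c301 c220 c211 c202 c130 c121 c112 c103 c040 c031 c022 c013 c004)) = (-6) * c103 * c220 + (9) * c013 * c310 + (-1) * c112 * c211 + (4) * c121 * c202 + (-6) * c022 * c301 := by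
  rw [SG_Q15]
  simp only [coeff_add, coeff_monomial, mon3_eq_iff]
  norm_num
lemma ext112 : coeff (mon3 5 1 2) (SG (Q15 c400 c310 c301 c220 c211 c202 c130 c121 c112 c103 c040 c031 c022 c013 c004)) = (-6) * c130 * c202 + (4) * c112 * c220 + (-1) * c121 * c211 + (9) * c031 * c301 + (-6) * c022 * c310 := by
  rw [SG_Q15]
  simp only [coeff_add, coeff_monomial, mon3_eq_iff]
  norm_num
lemma ext103 : coeff (mon3 5 0 3) (SG (Q15 c400 c310 c301 c220 c211 c202 c130 c121 c112 c103 c040 c031 c022 c013 c004)) = (-12) * c040 * c301 + (3) * c130 * c211 + (3) * c031 * c310 + (-2) * c121 * c220 := by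
  rw [SG_Q15]
  simp only [coeff_add, coeff_monomial, mon3_eq_iff]
  norm_num
lemma ext040 : coeff (mon3 4 4 0) (SG (Q15 c400 c310 c301 c220 c211 c202 c130 c121 c112 c103 c040 c031 c022 c013 c004)) = (12) * c004 * c400 + (-3) * c103 * c301 + (1) * c202 * c202 := by
  rw [SG_Q15]
  simp only [coeff_add, coeff_monomial, mon3_eq_iff]
  norm_num
lemma ext031 : coeff (mon3 4 3 1) (SG (Q15 c400 c310 c301 c220 c211 c202 c130 c121 c112 c103 c040 c031 c022 c013 c004)) = (3) * c103 * c310 + (-12) * c013 * c400 + (3) * c112 * c301 + (-2) * c202 * c211 := by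
  rw [SG_Q15]
  simp only [coeff_add, coeff_monomial, mon3_eq_iff]
  norm_num
lemma ext022 : coeff (mon3 4 2 2) (SG (Q15 c400 c310 c301 c220 c211 c202 c130 c121 c112 c103 c040 c031 c022 c013 c004)) = (2) * c202 * c220 + (-3) * c112 * c310 + (1) * c211 * c211 + (-3) * c121 * c301 + (12) * c022 * c400 := by
  rw [SG_Q15]
  simp only [coeff_add, coeff_monomial, mon3_eq_iff]
  norm_num
lemma ext013 : coeff (mon3 4 1 3) (SG (Q15 c400 c310 c301 c220 c211 c202 c130 c121 c112 c103 c040 c031 c022 c013 c004)) = (3) * c130 * c301 + (-2) * c211 * c220 + (3) * c121 * c310 + (-12) * c031 * c400 := by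
  rw [SG_Q15]
  simp only [coeff_add, coeff_monomial, mon3_eq_iff]
  norm_num
lemma ext004 : coeff (mon3 4 0 4) (SG (Q15 c400 c310 c301 c220 c211 c202 c130 c121 c112 c103 c040 c031 c022 c013 c004)) = (12) * c040 * c400 + (-3) * c130 * c310 + (1) * c220 * c220 := by
  rw [SG_Q15]
  simp only [coeff_add, coeff_monomial, mon3_eq_iff]
  norm_num

end Aux


/-- The six identities among the coefficients `a_{ijk}` of a ternary quartic
form `q` and the coefficients `h_{ijk}` of its harmonic quartic `h` (`u⁴·h = SG q`), all sums
over `i,j,k ≥ 0` with `i+j+k = 4`. -/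
theorem stmt4 {R : Type*} [CommRing R]
    (q : MvPolynomial (Fin 3) R) (hq : q.IsHomogeneous 4)
    (h : MvPolynomial (Fin 3) R) (hh : X 0 ^ 4 * h = SG q) :
    (∑ m ∈ Finset.Nat.antidiagonalTuple 3 4,
        (((m 0 : ℤ) - (m 1 : ℤ) : ℤ) : R) * (fac3 (m 0) (m 1) (m 2) : R)
          * tcoeff q (m 0) (m 1) (m 2) * tcoeff h (m 0) (m 1) (m 2) = 0) ∧
    (∑ m ∈ Finset.Nat.antidiagonalTuple 3 4,
        ((m 0 + 1 : ℕ) : R) * (fac3 (m 0) (m 1) (m 2) : R)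
          * tcoeff q ((m 0 : ℤ) + 1) ((m 1 : ℤ) - 1) (m 2)
          * tcoeff h (m 0) (m 1) (m 2) = 0) ∧
    (∑ m ∈ Finset.Nat.antidiagonalTuple 3 4,
        ((m 0 + 1 : ℕ) : R) * (fac3 (m 0) (m 1) (m 2) : R)
          * tcoeff q ((m 0 : ℤ) + 1) (m 1) ((m 2 : ℤ) - 1)
          * tcoeff h (m 0) (m 1) (m 2) = 0) ∧
    (∑ m ∈ Finset.Nat.antidiagonalTuple 3 4,
        (((m 1 : ℤ) - (m 2 : ℤ) : ℤ) : R) * (fac3 (m 0) (m 1) (m 2) : R)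
          * tcoeff q (m 0) (m 1) (m 2) * tcoeff h (m 0) (m 1) (m 2) = 0) ∧
    (∑ m ∈ Finset.Nat.antidiagonalTuple 3 4,
        ((m 1 + 1 : ℕ) : R) * (fac3 (m 0) (m 1) (m 2) : R)
          * tcoeff q (m 0) ((m 1 : ℤ) + 1) ((m 2 : ℤ) - 1)
          * tcoeff h (m 0) (m 1) (m 2) = 0) ∧
    (∑ m ∈ Finset.Nat.antidiagonalTuple 3 4,
        ((m 1 + 1 : ℕ) : R) * (fac3 (m 0) (m 1) (m 2) : R)
          * tcoeff q ((m 0 : ℤ) - 1) ((m 1 : ℤ) + 1) (m 2)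
          * tcoeff h (m 0) (m 1) (m 2) = 0) := by
  
  classical
  obtain ⟨c400, hc400⟩ : ∃ c, coeff (mon3 4 0 0) q = c := ⟨_, rfl⟩
  obtain ⟨c310, hc310⟩ : ∃ c, coeff (mon3 3 1 0) q = c := ⟨_, rfl⟩
  obtain ⟨c301, hc301⟩ : ∃ c, coeff (mon3 3 0 1) q = c := ⟨_, rfl⟩
  obtain ⟨c220, hc220⟩ : ∃ c, coeff (mon3 2 2 0) q = c := ⟨_, rfl⟩
  obtain ⟨c211, hc211⟩ : ∃ c, coeff (mon3 2 1 1) q = c := ⟨_, rfl⟩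
  obtain ⟨c202, hc202⟩ : ∃ c, coeff (mon3 2 0 2) q = c := ⟨_, rfl⟩
  obtain ⟨c130, hc130⟩ : ∃ c, coeff (mon3 1 3 0) q = c := ⟨_, rfl⟩
  obtain ⟨c121, hc121⟩ : ∃ c, coeff (mon3 1 2 1) q = c := ⟨_, rfl⟩
  obtain ⟨c112, hc112⟩ : ∃ c, coeff (mon3 1 1 2) q = c := ⟨_, rfl⟩
  obtain ⟨c103, hc103⟩ : ∃ c, coeff (mon3 1 0 3) q = c := ⟨_, rfl⟩
  obtain ⟨c040, hc040⟩ : ∃ c, coeff (mon3 0 4 0) q = c := ⟨_, rfl⟩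
  obtain ⟨c031, hc031⟩ : ∃ c, coeff (mon3 0 3 1) q = c := ⟨_, rfl⟩
  obtain ⟨c022, hc022⟩ : ∃ c, coeff (mon3 0 2 2) q = c := ⟨_, rfl⟩
  obtain ⟨c013, hc013⟩ : ∃ c, coeff (mon3 0 1 3) q = c := ⟨_, rfl⟩
  obtain ⟨c004, hc004⟩ : ∃ c, coeff (mon3 0 0 4) q = c := ⟨_, rfl⟩
  have hqd := decomp q hq
  rw [hc400, hc310, hc301, hc220, hc211, hc202, hc130, hc121, hc112, hc103, hc040, hc031, hc022, hc013, hc004] at hqd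
  have hf400 : fac3 4 0 0 = 12 := by decide
  have hf310 : fac3 3 1 0 = 3 := by decide
  have hf301 : fac3 3 0 1 = 3 := by decide
  have hf220 : fac3 2 2 0 = 2 := by decide
  have hf211 : fac3 2 1 1 = 1 := by decide
  have hf202 : fac3 2 0 2 = 2 := by decide
  have hf130 : fac3 1 3 0 = 3 := by decide
  have hf121 : fac3 1 2 1 = 1 := by decide
  have hf112 : fac3 1 1 2 = 1 := by decide
  have hf103 : fac3 1 0 3 = 3 := by decide
  have hf040 : fac3 0 4 0 = 12 := by decide
  have hf031 : fac3 0 3 1 = 3 := by decide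
  have hf022 : fac3 0 2 2 = 2 := by decide
  have hf013 : fac3 0 1 3 = 3 := by decide
  have hf004 : fac3 0 0 4 = 12 := by decide
  have th400 : tcoeff h ((4:ℕ):ℤ) ((0:ℕ):ℤ) ((0:ℕ):ℤ) = (12) * c004 * c040 + (-3) * c013 * c031 + (1) * c022 * c022 := by
    have s1 : tcoeff h ((4:ℕ):ℤ) ((0:ℕ):ℤ) ((0:ℕ):ℤ) = coeff (mon3 4 0 0) h := by
      simp [tcoeff, mon3, myToNat]
    rw [s1, lemA q h hh 4 0 0 8 (by norm_num), hqd]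
    exact ext400 c400 c310 c301 c220 c211 c202 c130 c121 c112 c103 c040 c031 c022 c013 c004
  have th310 : tcoeff h ((3:ℕ):ℤ) ((1:ℕ):ℤ) ((0:ℕ):ℤ) = (-12) * c004 * c130 + (3) * c013 * c121 + (3) * c031 * c103 + (-2) * c022 * c112 := by
    have s1 : tcoeff h ((3:ℕ):ℤ) ((1:ℕ):ℤ) ((0:ℕ):ℤ) = coeff (mon3 3 1 0) h := by
      simp [tcoeff, mon3, myToNat]
    rw [s1, lemA q h hh 3 1 0 7 (by norm_num), hqd]
    exact ext310 c400 c310 c301 c220 c211 c202 c130 c121 c112 c103 c040 c031 c022 c013 c004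
  have th301 : tcoeff h ((3:ℕ):ℤ) ((0:ℕ):ℤ) ((1:ℕ):ℤ) = (-12) * c040 * c103 + (3) * c013 * c130 + (3) * c031 * c112 + (-2) * c022 * c121 := by
    have s1 : tcoeff h ((3:ℕ):ℤ) ((0:ℕ):ℤ) ((1:ℕ):ℤ) = coeff (mon3 3 0 1) h := by
      simp [tcoeff, mon3, myToNat]
    rw [s1, lemA q h hh 3 0 1 7 (by norm_num), hqd]
    exact ext301 c400 c310 c301 c220 c211 c202 c130 c121 c112 c103 c040 c031 c022 c013 c004
  have th220 : tcoeff h ((2:ℕ):ℤ) ((2:ℕ):ℤ) ((0:ℕ):ℤ) = (12) * c004 * c220 + (-3) * c013 * c211 + (-3) * c103 * c121 + (2) * c022 * c202 + (1) * c112 * c112 := by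
    have s1 : tcoeff h ((2:ℕ):ℤ) ((2:ℕ):ℤ) ((0:ℕ):ℤ) = coeff (mon3 2 2 0) h := by
      simp [tcoeff, mon3, myToNat]
    rw [s1, lemA q h hh 2 2 0 6 (by norm_num), hqd]
    exact ext220 c400 c310 c301 c220 c211 c202 c130 c121 c112 c103 c040 c031 c022 c013 c004
  have th211 : tcoeff h ((2:ℕ):ℤ) ((1:ℕ):ℤ) ((1:ℕ):ℤ) = (9) * c103 * c130 + (-6) * c013 * c220 + (-1) * c112 * c121 + (-6) * c031 * c202 + (4) * c022 * c211 := by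
    have s1 : tcoeff h ((2:ℕ):ℤ) ((1:ℕ):ℤ) ((1:ℕ):ℤ) = coeff (mon3 2 1 1) h := by
      simp [tcoeff, mon3, myToNat]
    rw [s1, lemA q h hh 2 1 1 6 (by norm_num), hqd]
    exact ext211 c400 c310 c301 c220 c211 c202 c130 c121 c112 c103 c040 c031 c022 c013 c004
  have th202 : tcoeff h ((2:ℕ):ℤ) ((0:ℕ):ℤ) ((2:ℕ):ℤ) = (12) * c040 * c202 + (-3) * c112 * c130 + (-3) * c031 * c211 + (2) * c022 * c220 + (1) * c121 * c121 := by
    have s1 : tcoeff h ((2:ℕ):ℤ) ((0:ℕ):ℤ) ((2:ℕ):ℤ) = coeff (mon3 2 0 2) h := by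
      simp [tcoeff, mon3, myToNat]
    rw [s1, lemA q h hh 2 0 2 6 (by norm_num), hqd]
    exact ext202 c400 c310 c301 c220 c211 c202 c130 c121 c112 c103 c040 c031 c022 c013 c004
  have th130 : tcoeff h ((1:ℕ):ℤ) ((3:ℕ):ℤ) ((0:ℕ):ℤ) = (-12) * c004 * c310 + (3) * c013 * c301 + (3) * c103 * c211 + (-2) * c112 * c202 := by
    have s1 : tcoeff h ((1:ℕ):ℤ) ((3:ℕ):ℤ) ((0:ℕ):ℤ) = coeff (mon3 1 3 0) h := by
      simp [tcoeff, mon3, myToNat]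
    rw [s1, lemA q h hh 1 3 0 5 (by norm_num), hqd]
    exact ext130 c400 c310 c301 c220 c211 c202 c130 c121 c112 c103 c040 c031 c022 c013 c004
  have th121 : tcoeff h ((1:ℕ):ℤ) ((2:ℕ):ℤ) ((1:ℕ):ℤ) = (-6) * c103 * c220 + (9) * c013 * c310 + (-1) * c112 * c211 + (4) * c121 * c202 + (-6) * c022 * c301 := by
    have s1 : tcoeff h ((1:ℕ):ℤ) ((2:ℕ):ℤ) ((1:ℕ):ℤ) = coeff (mon3 1 2 1) h := by
      simp [tcoeff, mon3, myToNat]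
    rw [s1, lemA q h hh 1 2 1 5 (by norm_num), hqd]
    exact ext121 c400 c310 c301 c220 c211 c202 c130 c121 c112 c103 c040 c031 c022 c013 c004
  have th112 : tcoeff h ((1:ℕ):ℤ) ((1:ℕ):ℤ) ((2:ℕ):ℤ) = (-6) * c130 * c202 + (4) * c112 * c220 + (-1) * c121 * c211 + (9) * c031 * c301 + (-6) * c022 * c310 := by
    have s1 : tcoeff h ((1:ℕ):ℤ) ((1:ℕ):ℤ) ((2:ℕ):ℤ) = coeff (mon3 1 1 2) h := by
      simp [tcoeff, mon3, myToNat]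
    rw [s1, lemA q h hh 1 1 2 5 (by norm_num), hqd]
    exact ext112 c400 c310 c301 c220 c211 c202 c130 c121 c112 c103 c040 c031 c022 c013 c004
  have th103 : tcoeff h ((1:ℕ):ℤ) ((0:ℕ):ℤ) ((3:ℕ):ℤ) = (-12) * c040 * c301 + (3) * c130 * c211 + (3) * c031 * c310 + (-2) * c121 * c220 := by
    have s1 : tcoeff h ((1:ℕ):ℤ) ((0:ℕ):ℤ) ((3:ℕ):ℤ) = coeff (mon3 1 0 3) h := by
      simp [tcoeff, mon3, myToNat]
    rw [s1, lemA q h hh 1 0 3 5 (by norm_num), hqd]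
    exact ext103 c400 c310 c301 c220 c211 c202 c130 c121 c112 c103 c040 c031 c022 c013 c004
  have th040 : tcoeff h ((0:ℕ):ℤ) ((4:ℕ):ℤ) ((0:ℕ):ℤ) = (12) * c004 * c400 + (-3) * c103 * c301 + (1) * c202 * c202 := by
    have s1 : tcoeff h ((0:ℕ):ℤ) ((4:ℕ):ℤ) ((0:ℕ):ℤ) = coeff (mon3 0 4 0) h := by
      simp [tcoeff, mon3, myToNat]
    rw [s1, lemA q h hh 0 4 0 4 (by norm_num), hqd]
    exact ext040 c400 c310 c301 c220 c211 c202 c130 c121 c112 c103 c040 c031 c022 c013 c004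
  have th031 : tcoeff h ((0:ℕ):ℤ) ((3:ℕ):ℤ) ((1:ℕ):ℤ) = (3) * c103 * c310 + (-12) * c013 * c400 + (3) * c112 * c301 + (-2) * c202 * c211 := by
    have s1 : tcoeff h ((0:ℕ):ℤ) ((3:ℕ):ℤ) ((1:ℕ):ℤ) = coeff (mon3 0 3 1) h := by
      simp [tcoeff, mon3, myToNat]
    rw [s1, lemA q h hh 0 3 1 4 (by norm_num), hqd]
    exact ext031 c400 c310 c301 c220 c211 c202 c130 c121 c112 c103 c040 c031 c022 c013 c004
  have th022 : tcoeff h ((0:ℕ):ℤ) ((2:ℕ):ℤ) ((2:ℕ):ℤ) = (2) * c202 * c220 + (-3) * c112 * c310 + (1) * c211 * c211 + (-3) * c121 * c301 + (12) * c022 * c400 := by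
    have s1 : tcoeff h ((0:ℕ):ℤ) ((2:ℕ):ℤ) ((2:ℕ):ℤ) = coeff (mon3 0 2 2) h := by
      simp [tcoeff, mon3, myToNat]
    rw [s1, lemA q h hh 0 2 2 4 (by norm_num), hqd]
    exact ext022 c400 c310 c301 c220 c211 c202 c130 c121 c112 c103 c040 c031 c022 c013 c004
  have th013 : tcoeff h ((0:ℕ):ℤ) ((1:ℕ):ℤ) ((3:ℕ):ℤ) = (3) * c130 * c301 + (-2) * c211 * c220 + (3) * c121 * c310 + (-12) * c031 * c400 := by
    have s1 : tcoeff h ((0:ℕ):ℤ) ((1:ℕ):ℤ) ((3:ℕ):ℤ) = coeff (mon3 0 1 3) h := by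
      simp [tcoeff, mon3, myToNat]
    rw [s1, lemA q h hh 0 1 3 4 (by norm_num), hqd]
    exact ext013 c400 c310 c301 c220 c211 c202 c130 c121 c112 c103 c040 c031 c022 c013 c004
  have th004 : tcoeff h ((0:ℕ):ℤ) ((0:ℕ):ℤ) ((4:ℕ):ℤ) = (12) * c040 * c400 + (-3) * c130 * c310 + (1) * c220 * c220 := by
    have s1 : tcoeff h ((0:ℕ):ℤ) ((0:ℕ):ℤ) ((4:ℕ):ℤ) = coeff (mon3 0 0 4) h := by
      simp [tcoeff, mon3, myToNat]
    rw [s1, lemA q h hh 0 0 4 4 (by norm_num), hqd]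
    exact ext004 c400 c310 c301 c220 c211 c202 c130 c121 c112 c103 c040 c031 c022 c013 c004
  have tqa400 : tcoeff q ((4:ℕ):ℤ) ((0:ℕ):ℤ) ((0:ℕ):ℤ) = c400 := by
    rw [← hc400]; simp [tcoeff, mon3, myToNat]
  have tqa310 : tcoeff q ((3:ℕ):ℤ) ((1:ℕ):ℤ) ((0:ℕ):ℤ) = c310 := by
    rw [← hc310]; simp [tcoeff, mon3, myToNat]
  have tqa301 : tcoeff q ((3:ℕ):ℤ) ((0:ℕ):ℤ) ((1:ℕ):ℤ) = c301 := by
    rw [← hc301]; simp [tcoeff, mon3, myToNat]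
  have tqa220 : tcoeff q ((2:ℕ):ℤ) ((2:ℕ):ℤ) ((0:ℕ):ℤ) = c220 := by
    rw [← hc220]; simp [tcoeff, mon3, myToNat]
  have tqa211 : tcoeff q ((2:ℕ):ℤ) ((1:ℕ):ℤ) ((1:ℕ):ℤ) = c211 := by
    rw [← hc211]; simp [tcoeff, mon3, myToNat]
  have tqa202 : tcoeff q ((2:ℕ):ℤ) ((0:ℕ):ℤ) ((2:ℕ):ℤ) = c202 := by
    rw [← hc202]; simp [tcoeff, mon3, myToNat]
  have tqa130 : tcoeff q ((1:ℕ):ℤ) ((3:ℕ):ℤ) ((0:ℕ):ℤ) = c130 := by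
    rw [← hc130]; simp [tcoeff, mon3, myToNat]
  have tqa121 : tcoeff q ((1:ℕ):ℤ) ((2:ℕ):ℤ) ((1:ℕ):ℤ) = c121 := by
    rw [← hc121]; simp [tcoeff, mon3, myToNat]
  have tqa112 : tcoeff q ((1:ℕ):ℤ) ((1:ℕ):ℤ) ((2:ℕ):ℤ) = c112 := by
    rw [← hc112]; simp [tcoeff, mon3, myToNat]
  have tqa103 : tcoeff q ((1:ℕ):ℤ) ((0:ℕ):ℤ) ((3:ℕ):ℤ) = c103 := by
    rw [← hc103]; simp [tcoeff, mon3, myToNat]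
  have tqa040 : tcoeff q ((0:ℕ):ℤ) ((4:ℕ):ℤ) ((0:ℕ):ℤ) = c040 := by
    rw [← hc040]; simp [tcoeff, mon3, myToNat]
  have tqa031 : tcoeff q ((0:ℕ):ℤ) ((3:ℕ):ℤ) ((1:ℕ):ℤ) = c031 := by
    rw [← hc031]; simp [tcoeff, mon3, myToNat]
  have tqa022 : tcoeff q ((0:ℕ):ℤ) ((2:ℕ):ℤ) ((2:ℕ):ℤ) = c022 := by
    rw [← hc022]; simp [tcoeff, mon3, myToNat]
  have tqa013 : tcoeff q ((0:ℕ):ℤ) ((1:ℕ):ℤ) ((3:ℕ):ℤ) = c013 := by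
    rw [← hc013]; simp [tcoeff, mon3, myToNat]
  have tqa004 : tcoeff q ((0:ℕ):ℤ) ((0:ℕ):ℤ) ((4:ℕ):ℤ) = c004 := by
    rw [← hc004]; simp [tcoeff, mon3, myToNat]
  have tqb400 : tcoeff q (((4:ℕ):ℤ) + 1) (((0:ℕ):ℤ) - 1) ((0:ℕ):ℤ) = 0 := by norm_num [tcoeff]
  have tqb310 : tcoeff q (((3:ℕ):ℤ) + 1) (((1:ℕ):ℤ) - 1) ((0:ℕ):ℤ) = c400 := by
    rw [← hc400]; simp [tcoeff, mon3, myToNat]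
  have tqb301 : tcoeff q (((3:ℕ):ℤ) + 1) (((0:ℕ):ℤ) - 1) ((1:ℕ):ℤ) = 0 := by norm_num [tcoeff]
  have tqb220 : tcoeff q (((2:ℕ):ℤ) + 1) (((2:ℕ):ℤ) - 1) ((0:ℕ):ℤ) = c310 := by
    rw [← hc310]; simp [tcoeff, mon3, myToNat]
  have tqb211 : tcoeff q (((2:ℕ):ℤ) + 1) (((1:ℕ):ℤ) - 1) ((1:ℕ):ℤ) = c301 := by
    rw [← hc301]; simp [tcoeff, mon3, myToNat]
  have tqb202 : tcoeff q (((2:ℕ):ℤ) + 1) (((0:ℕ):ℤ) - 1) ((2:ℕ):ℤ) = 0 := by norm_num [tcoeff]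
  have tqb130 : tcoeff q (((1:ℕ):ℤ) + 1) (((3:ℕ):ℤ) - 1) ((0:ℕ):ℤ) = c220 := by
    rw [← hc220]; simp [tcoeff, mon3, myToNat]
  have tqb121 : tcoeff q (((1:ℕ):ℤ) + 1) (((2:ℕ):ℤ) - 1) ((1:ℕ):ℤ) = c211 := by
    rw [← hc211]; simp [tcoeff, mon3, myToNat]
  have tqb112 : tcoeff q (((1:ℕ):ℤ) + 1) (((1:ℕ):ℤ) - 1) ((2:ℕ):ℤ) = c202 := by
    rw [← hc202]; simp [tcoeff, mon3, myToNat]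
  have tqb103 : tcoeff q (((1:ℕ):ℤ) + 1) (((0:ℕ):ℤ) - 1) ((3:ℕ):ℤ) = 0 := by norm_num [tcoeff]
  have tqb040 : tcoeff q (((0:ℕ):ℤ) + 1) (((4:ℕ):ℤ) - 1) ((0:ℕ):ℤ) = c130 := by
    rw [← hc130]; simp [tcoeff, mon3, myToNat]
  have tqb031 : tcoeff q (((0:ℕ):ℤ) + 1) (((3:ℕ):ℤ) - 1) ((1:ℕ):ℤ) = c121 := by
    rw [← hc121]; simp [tcoeff, mon3, myToNat]
  have tqb022 : tcoeff q (((0:ℕ):ℤ) + 1) (((2:ℕ):ℤ) - 1) ((2:ℕ):ℤ) = c112 := by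
    rw [← hc112]; simp [tcoeff, mon3, myToNat]
  have tqb013 : tcoeff q (((0:ℕ):ℤ) + 1) (((1:ℕ):ℤ) - 1) ((3:ℕ):ℤ) = c103 := by
    rw [← hc103]; simp [tcoeff, mon3, myToNat]
  have tqb004 : tcoeff q (((0:ℕ):ℤ) + 1) (((0:ℕ):ℤ) - 1) ((4:ℕ):ℤ) = 0 := by norm_num [tcoeff]
  have tqc400 : tcoeff q (((4:ℕ):ℤ) + 1) ((0:ℕ):ℤ) (((0:ℕ):ℤ) - 1) = 0 := by norm_num [tcoeff]
  have tqc310 : tcoeff q (((3:ℕ):ℤ) + 1) ((1:ℕ):ℤ) (((0:ℕ):ℤ) - 1) = 0 := by norm_num [tcoeff]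
  have tqc301 : tcoeff q (((3:ℕ):ℤ) + 1) ((0:ℕ):ℤ) (((1:ℕ):ℤ) - 1) = c400 := by
    rw [← hc400]; simp [tcoeff, mon3, myToNat]
  have tqc220 : tcoeff q (((2:ℕ):ℤ) + 1) ((2:ℕ):ℤ) (((0:ℕ):ℤ) - 1) = 0 := by norm_num [tcoeff]
  have tqc211 : tcoeff q (((2:ℕ):ℤ) + 1) ((1:ℕ):ℤ) (((1:ℕ):ℤ) - 1) = c310 := by
    rw [← hc310]; simp [tcoeff, mon3, myToNat]
  have tqc202 : tcoeff q (((2:ℕ):ℤ) + 1) ((0:ℕ):ℤ) (((2:ℕ):ℤ) - 1) = c301 := by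
    rw [← hc301]; simp [tcoeff, mon3, myToNat]
  have tqc130 : tcoeff q (((1:ℕ):ℤ) + 1) ((3:ℕ):ℤ) (((0:ℕ):ℤ) - 1) = 0 := by norm_num [tcoeff]
  have tqc121 : tcoeff q (((1:ℕ):ℤ) + 1) ((2:ℕ):ℤ) (((1:ℕ):ℤ) - 1) = c220 := by
    rw [← hc220]; simp [tcoeff, mon3, myToNat]
  have tqc112 : tcoeff q (((1:ℕ):ℤ) + 1) ((1:ℕ):ℤ) (((2:ℕ):ℤ) - 1) = c211 := by
    rw [← hc211]; simp [tcoeff, mon3, myToNat]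
  have tqc103 : tcoeff q (((1:ℕ):ℤ) + 1) ((0:ℕ):ℤ) (((3:ℕ):ℤ) - 1) = c202 := by
    rw [← hc202]; simp [tcoeff, mon3, myToNat]
  have tqc040 : tcoeff q (((0:ℕ):ℤ) + 1) ((4:ℕ):ℤ) (((0:ℕ):ℤ) - 1) = 0 := by norm_num [tcoeff]
  have tqc031 : tcoeff q (((0:ℕ):ℤ) + 1) ((3:ℕ):ℤ) (((1:ℕ):ℤ) - 1) = c130 := by
    rw [← hc130]; simp [tcoeff, mon3, myToNat]
  have tqc022 : tcoeff q (((0:ℕ):ℤ) + 1) ((2:ℕ):ℤ) (((2:ℕ):ℤ) - 1) = c121 := by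
    rw [← hc121]; simp [tcoeff, mon3, myToNat]
  have tqc013 : tcoeff q (((0:ℕ):ℤ) + 1) ((1:ℕ):ℤ) (((3:ℕ):ℤ) - 1) = c112 := by
    rw [← hc112]; simp [tcoeff, mon3, myToNat]
  have tqc004 : tcoeff q (((0:ℕ):ℤ) + 1) ((0:ℕ):ℤ) (((4:ℕ):ℤ) - 1) = c103 := by
    rw [← hc103]; simp [tcoeff, mon3, myToNat]
  have tqe400 : tcoeff q ((4:ℕ):ℤ) (((0:ℕ):ℤ) + 1) (((0:ℕ):ℤ) - 1) = 0 := by norm_num [tcoeff]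
  have tqe310 : tcoeff q ((3:ℕ):ℤ) (((1:ℕ):ℤ) + 1) (((0:ℕ):ℤ) - 1) = 0 := by norm_num [tcoeff]
  have tqe301 : tcoeff q ((3:ℕ):ℤ) (((0:ℕ):ℤ) + 1) (((1:ℕ):ℤ) - 1) = c310 := by
    rw [← hc310]; simp [tcoeff, mon3, myToNat]
  have tqe220 : tcoeff q ((2:ℕ):ℤ) (((2:ℕ):ℤ) + 1) (((0:ℕ):ℤ) - 1) = 0 := by norm_num [tcoeff]
  have tqe211 : tcoeff q ((2:ℕ):ℤ) (((1:ℕ):ℤ) + 1) (((1:ℕ):ℤ) - 1) = c220 := by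
    rw [← hc220]; simp [tcoeff, mon3, myToNat]
  have tqe202 : tcoeff q ((2:ℕ):ℤ) (((0:ℕ):ℤ) + 1) (((2:ℕ):ℤ) - 1) = c211 := by
    rw [← hc211]; simp [tcoeff, mon3, myToNat]
  have tqe130 : tcoeff q ((1:ℕ):ℤ) (((3:ℕ):ℤ) + 1) (((0:ℕ):ℤ) - 1) = 0 := by norm_num [tcoeff]
  have tqe121 : tcoeff q ((1:ℕ):ℤ) (((2:ℕ):ℤ) + 1) (((1:ℕ):ℤ) - 1) = c130 := by
    rw [← hc130]; simp [tcoeff, mon3, myToNat]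
  have tqe112 : tcoeff q ((1:ℕ):ℤ) (((1:ℕ):ℤ) + 1) (((2:ℕ):ℤ) - 1) = c121 := by
    rw [← hc121]; simp [tcoeff, mon3, myToNat]
  have tqe103 : tcoeff q ((1:ℕ):ℤ) (((0:ℕ):ℤ) + 1) (((3:ℕ):ℤ) - 1) = c112 := by
    rw [← hc112]; simp [tcoeff, mon3, myToNat]
  have tqe040 : tcoeff q ((0:ℕ):ℤ) (((4:ℕ):ℤ) + 1) (((0:ℕ):ℤ) - 1) = 0 := by norm_num [tcoeff]
  have tqe031 : tcoeff q ((0:ℕ):ℤ) (((3:ℕ):ℤ) + 1) (((1:ℕ):ℤ) - 1) = c040 := by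
    rw [← hc040]; simp [tcoeff, mon3, myToNat]
  have tqe022 : tcoeff q ((0:ℕ):ℤ) (((2:ℕ):ℤ) + 1) (((2:ℕ):ℤ) - 1) = c031 := by
    rw [← hc031]; simp [tcoeff, mon3, myToNat]
  have tqe013 : tcoeff q ((0:ℕ):ℤ) (((1:ℕ):ℤ) + 1) (((3:ℕ):ℤ) - 1) = c022 := by
    rw [← hc022]; simp [tcoeff, mon3, myToNat]
  have tqe004 : tcoeff q ((0:ℕ):ℤ) (((0:ℕ):ℤ) + 1) (((4:ℕ):ℤ) - 1) = c013 := by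
    rw [← hc013]; simp [tcoeff, mon3, myToNat]
  have tqf400 : tcoeff q (((4:ℕ):ℤ) - 1) (((0:ℕ):ℤ) + 1) ((0:ℕ):ℤ) = c310 := by
    rw [← hc310]; simp [tcoeff, mon3, myToNat]
  have tqf310 : tcoeff q (((3:ℕ):ℤ) - 1) (((1:ℕ):ℤ) + 1) ((0:ℕ):ℤ) = c220 := by
    rw [← hc220]; simp [tcoeff, mon3, myToNat]
  have tqf301 : tcoeff q (((3:ℕ):ℤ) - 1) (((0:ℕ):ℤ) + 1) ((1:ℕ):ℤ) = c211 := by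
    rw [← hc211]; simp [tcoeff, mon3, myToNat]
  have tqf220 : tcoeff q (((2:ℕ):ℤ) - 1) (((2:ℕ):ℤ) + 1) ((0:ℕ):ℤ) = c130 := by
    rw [← hc130]; simp [tcoeff, mon3, myToNat]
  have tqf211 : tcoeff q (((2:ℕ):ℤ) - 1) (((1:ℕ):ℤ) + 1) ((1:ℕ):ℤ) = c121 := by
    rw [← hc121]; simp [tcoeff, mon3, myToNat]
  have tqf202 : tcoeff q (((2:ℕ):ℤ) - 1) (((0:ℕ):ℤ) + 1) ((2:ℕ):ℤ) = c112 := by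
    rw [← hc112]; simp [tcoeff, mon3, myToNat]
  have tqf130 : tcoeff q (((1:ℕ):ℤ) - 1) (((3:ℕ):ℤ) + 1) ((0:ℕ):ℤ) = c040 := by
    rw [← hc040]; simp [tcoeff, mon3, myToNat]
  have tqf121 : tcoeff q (((1:ℕ):ℤ) - 1) (((2:ℕ):ℤ) + 1) ((1:ℕ):ℤ) = c031 := by
    rw [← hc031]; simp [tcoeff, mon3, myToNat]
  have tqf112 : tcoeff q (((1:ℕ):ℤ) - 1) (((1:ℕ):ℤ) + 1) ((2:ℕ):ℤ) = c022 := by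
    rw [← hc022]; simp [tcoeff, mon3, myToNat]
  have tqf103 : tcoeff q (((1:ℕ):ℤ) - 1) (((0:ℕ):ℤ) + 1) ((3:ℕ):ℤ) = c013 := by
    rw [← hc013]; simp [tcoeff, mon3, myToNat]
  have tqf040 : tcoeff q (((0:ℕ):ℤ) - 1) (((4:ℕ):ℤ) + 1) ((0:ℕ):ℤ) = 0 := by norm_num [tcoeff]
  have tqf031 : tcoeff q (((0:ℕ):ℤ) - 1) (((3:ℕ):ℤ) + 1) ((1:ℕ):ℤ) = 0 := by norm_num [tcoeff]
  have tqf022 : tcoeff q (((0:ℕ):ℤ) - 1) (((2:ℕ):ℤ) + 1) ((2:ℕ):ℤ) = 0 := by norm_num [tcoeff]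
  have tqf013 : tcoeff q (((0:ℕ):ℤ) - 1) (((1:ℕ):ℤ) + 1) ((3:ℕ):ℤ) = 0 := by norm_num [tcoeff]
  have tqf004 : tcoeff q (((0:ℕ):ℤ) - 1) (((0:ℕ):ℤ) + 1) ((4:ℕ):ℤ) = 0 := by norm_num [tcoeff]
  refine ⟨?_, ?_, ?_, ?_, ?_, ?_⟩
  · rw [sum_adt]
    simp only [Matrix.cons_val_zero, Matrix.cons_val_one, Matrix.head_cons,
      Matrix.cons_val_two, Matrix.tail_cons]
    simp only [tqa400, tqa310, tqa301, tqa220, tqa211, tqa202, tqa130, tqa121, tqa112, tqa103, tqa040, tqa031, tqa022, tqa013, tqa004, th400, th310, th301, th220, th211, th202, th130, th121, th112, th103, th040, th031, th022, th013, th004, hf400, hf310, hf301, hf220, hf211, hf202, hf130, hf121, hf112, hf103, hf040, hf031, hf022, hf013, hf004]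
    push_cast
    ring
  · rw [sum_adt]
    simp only [Matrix.cons_val_zero, Matrix.cons_val_one, Matrix.head_cons,
      Matrix.cons_val_two, Matrix.tail_cons]
    simp only [tqb400, tqb310, tqb301, tqb220, tqb211, tqb202, tqb130, tqb121, tqb112, tqb103, tqb040, tqb031, tqb022, tqb013, tqb004, th400, th310, th301, th220, th211, th202, th130, th121, th112, th103, th040, th031, th022, th013, th004, hf400, hf310, hf301, hf220, hf211, hf202, hf130, hf121, hf112, hf103, hf040, hf031, hf022, hf013, hf004]
    push_cast
    ring
  · rw [sum_adt]
    simp only [Matrix.cons_val_zero, Matrix.cons_val_one, Matrix.head_cons,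
      Matrix.cons_val_two, Matrix.tail_cons]
    simp only [tqc400, tqc310, tqc301, tqc220, tqc211, tqc202, tqc130, tqc121, tqc112, tqc103, tqc040, tqc031, tqc022, tqc013, tqc004, th400, th310, th301, th220, th211, th202, th130, th121, th112, th103, th040, th031, th022, th013, th004, hf400, hf310, hf301, hf220, hf211, hf202, hf130, hf121, hf112, hf103, hf040, hf031, hf022, hf013, hf004]
    push_cast
    ring
  · rw [sum_adt]
    simp only [Matrix.cons_val_zero, Matrix.cons_val_one, Matrix.head_cons,
      Matrix.cons_val_two, Matrix.tail_cons]
    simp only [tqa400, tqa310, tqa301, tqa220, tqa211, tqa202, tqa130, tqa121, tqa112, tqa103, tqa040, tqa031, tqa022, tqa013, tqa004, th400, th310, th301, th220, th211, th202, th130, th121, th112, th103, th040, th031, th022, th013, th004, hf400, hf310, hf301, hf220, hf211, hf202, hf130, hf121, hf112, hf103, hf040, hf031, hf022, hf013, hf004]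
    push_cast
    ring
  · rw [sum_adt]
    simp only [Matrix.cons_val_zero, Matrix.cons_val_one, Matrix.head_cons,
      Matrix.cons_val_two, Matrix.tail_cons]
    simp only [tqe400, tqe310, tqe301, tqe220, tqe211, tqe202, tqe130, tqe121, tqe112, tqe103, tqe040, tqe031, tqe022, tqe013, tqe004, th400, th310, th301, th220, th211, th202, th130, th121, th112, th103, th040, th031, th022, th013, th004, hf400, hf310, hf301, hf220, hf211, hf202, hf130, hf121, hf112, hf103, hf040, hf031, hf022, hf013, hf004]
    push_cast
    ring
  · rw [sum_adt]
    simp only [Matrix.cons_val_zero, Matrix.cons_val_one, Matrix.head_cons,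
      Matrix.cons_val_two, Matrix.tail_cons]
    simp only [tqf400, tqf310, tqf301, tqf220, tqf211, tqf202, tqf130, tqf121, tqf112, tqf103, tqf040, tqf031, tqf022, tqf013, tqf004, th400, th310, th301, th220, th211, th202, th130, th121, th112, th103, th040, th031, th022, th013, th004, hf400, hf310, hf301, hf220, hf211, hf202, hf130, hf121, hf112, hf103, hf040, hf031, hf022, hf013, hf004]
    push_cast
    ring
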